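/- If a minimal monomial sequence f_1, ..., f_n is a d-sequence, then every subsequence of it is also a d-sequence. -/

import Mathlib

open MvPolynomial

/-- A sequence `f_0,…,f_{n-1}` (0-based) is a d-sequence if it minimally
generates its ideal (for monomials: no `f_i` divides `f_j` for `i ≠ j`) and
`(f_0,…,f_{i-1}) : (f_i f_k) = (f_0,…,f_{i-1}) : f_k` for all `i ≤ k`. -/
def IsDSequence {R : Type*} [CommRing R] {n : ℕ} (f : Fin n → R) : Prop :=
  (∀ i j : Fin n, i ≠ j → ¬f i ∣ f j) ∧
    ∀ i k : Fin n, i ≤ k →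
      (Ideal.span (f '' {j | j < i})).colon (Ideal.span {f i * f k}) =
        (Ideal.span (f '' {j | j < i})).colon (Ideal.span {f k})

namespace DSeqAux

variable {K : Type*} [Field K] {m : ℕ}

/-- Membership in a monomial ideal. -/
lemma mem_span_mono (S : Set (Fin m →₀ ℕ)) (q : MvPolynomial (Fin m) K) :
    q ∈ Ideal.span ((fun d => (monomial d (1 : K))) '' S) ↔
      ∀ d ∈ q.support, ∃ b ∈ S, b ≤ d := by
  classical
  constructor
  · intro hq
    refine Submodule.span_induction (p := fun x _ => ∀ d ∈ x.support, ∃ b ∈ S, b ≤ d)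
      ?_ ?_ ?_ ?_ hq
    · rintro x ⟨b, hb, rfl⟩ d hd
      rw [support_monomial, if_neg one_ne_zero, Finset.mem_singleton] at hd
      exact ⟨b, hb, hd ▸ le_rfl⟩
    · simp
    · intro x y _ _ hx hy d hd
      rcases Finset.mem_union.mp (MvPolynomial.support_add hd) with h | h
      · exact hx d h
      · exact hy d h
    · intro c x _ hx d hd
      rw [smul_eq_mul] at hd
      obtain ⟨u, hu, v, hv, rfl⟩ := Finset.mem_add.mp (MvPolynomial.support_mul c x hd)
      obtain ⟨b, hb, hle⟩ := hx v hv
      exact ⟨b, hb, hle.trans le_add_self⟩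
  · intro h
    nth_rewrite 1 [MvPolynomial.as_sum q]
    apply Ideal.sum_mem
    intro d hd
    obtain ⟨b, hb, hle⟩ := h d hd
    have heq : monomial d (coeff d q) = monomial (d - b) (coeff d q) * monomial b (1 : K) := by
      rw [monomial_mul, mul_one, tsub_add_cancel_of_le hle]
    rw [heq]
    exact Ideal.mul_mem_left _ _ (Ideal.subset_span ⟨b, hb, rfl⟩)

/-- Membership in the colon of a monomial ideal by a monomial. -/
lemma mem_colon_mono (S : Set (Fin m →₀ ℕ)) (s : Fin m →₀ ℕ) (r : MvPolynomial (Fin m) K) :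
    r ∈ (Ideal.span ((fun d => (monomial d (1 : K))) '' S)).colon
        (Ideal.span {monomial s (1 : K)}) ↔
      ∀ e ∈ r.support, ∃ b ∈ S, b ≤ e + s := by
  rw [Ideal.mem_colon_span_singleton, mem_span_mono]
  constructor
  · intro h e he
    have hd : e + s ∈ (r * monomial s (1 : K)).support := by
      rw [MvPolynomial.mem_support_iff, coeff_mul_monomial', if_pos le_add_self,
        add_tsub_cancel_right, mul_one]
      exact MvPolynomial.mem_support_iff.mp he
    exact h _ hd
  · intro h d hd
    rw [MvPolynomial.mem_support_iff, coeff_mul_monomial'] at hd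
    split_ifs at hd with hs
    · have he : d - s ∈ r.support := by
        rw [MvPolynomial.mem_support_iff]
        intro h0
        rw [h0, zero_mul] at hd
        exact hd rfl
      obtain ⟨b, hb, hle⟩ := h _ he
      exact ⟨b, hb, by rwa [tsub_add_cancel_of_le hs] at hle⟩
    · exact absurd rfl hd

/-- Equality of two colons of a monomial ideal by monomials, combinatorially. -/
lemma colon_eq_iff (S : Set (Fin m →₀ ℕ)) (u v : Fin m →₀ ℕ) :
    ((Ideal.span ((fun d => (monomial d (1 : K))) '' S)).colon
        (Ideal.span {monomial u (1 : K)}) =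
      (Ideal.span ((fun d => (monomial d (1 : K))) '' S)).colon
        (Ideal.span {monomial v (1 : K)})) ↔
    ∀ e : Fin m →₀ ℕ, (∃ b ∈ S, b ≤ e + u) ↔ (∃ b ∈ S, b ≤ e + v) := by
  classical
  have hsupp : ∀ (e s : Fin m →₀ ℕ),
      (monomial e (1 : K)) ∈ (Ideal.span ((fun d => (monomial d (1 : K))) '' S)).colon
        (Ideal.span {monomial s (1 : K)}) ↔ (∃ b ∈ S, b ≤ e + s) := by
    intro e s
    rw [mem_colon_mono]
    simp [support_monomial]
  constructor
  · intro h e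
    rw [← hsupp e u, ← hsupp e v, h]
  · intro h
    ext r
    rw [mem_colon_mono, mem_colon_mono]
    exact forall₂_congr fun e _ => h e

/-- From the d-sequence colon conditions and minimality derive the gcd
characterization: `gcd(f_p, f_q) ∣ f_r` for `p < q < r`, and
`gcd(f_p, f_q) = gcd(f_p, f_q^2)` for `p < q`, stated on exponents. -/
lemma G1G2 {n : ℕ} (a : Fin n → (Fin m →₀ ℕ))
    (M : ∀ i j : Fin n, i ≠ j → ¬a i ≤ a j)
    (D : ∀ i k : Fin n, i ≤ k → ∀ e : Fin m →₀ ℕ,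
      (∃ j, j < i ∧ a j ≤ e + (a i + a k)) → (∃ j, j < i ∧ a j ≤ e + a k)) :
    (∀ p q r : Fin n, p < q → q < r → ∀ t, min (a p t) (a q t) ≤ a r t) ∧
    (∀ p q : Fin n, p < q → ∀ t, a q t < a p t → a q t = 0) := by
  have hG1 : ∀ N : ℕ, ∀ q p r : Fin n, q.val < N → p < q → q < r →
      ∀ t, min (a p t) (a q t) ≤ a r t := by
    intro N
    induction N with
    | zero => intro q p r hN; omega
    | succ N ih =>
      intro q p r hN hpq hqr t
      by_contra hcon
      push_neg at hcon
      obtain ⟨l, hlq, hl⟩ := D q r (le_of_lt hqr) (a p - (a q + a r))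
        ⟨p, hpq, le_tsub_add⟩
      by_cases hlp : l = p
      · subst hlp
        have h1 := Finsupp.le_def.mp hl t
        rw [Finsupp.add_apply, Finsupp.tsub_apply, Finsupp.add_apply] at h1
        omega
      · have hne : ¬a l ≤ a r := M l r (ne_of_lt (lt_trans hlq hqr))
        rw [Finsupp.le_def] at hne
        push_neg at hne
        obtain ⟨s, hs⟩ := hne
        have h2 := Finsupp.le_def.mp hl s
        rw [Finsupp.add_apply, Finsupp.tsub_apply, Finsupp.add_apply] at h2
        have hlqv : l.val < q.val := hlq
        have hpqv : p.val < q.val := hpq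
        rcases lt_or_gt_of_ne hlp with h | h
        · have h3 := ih p l r (by omega) h (lt_trans hpq hqr) s
          omega
        · have h3 := ih l p r (by omega) h (lt_trans hlq hqr) s
          omega
  have hG1' : ∀ p q r : Fin n, p < q → q < r → ∀ t, min (a p t) (a q t) ≤ a r t :=
    fun p q r hpq hqr t => hG1 (q.val + 1) q p r (Nat.lt_succ_self _) hpq hqr t
  refine ⟨hG1', ?_⟩
  intro p q hpq t hlt
  obtain ⟨l, hlq, hl⟩ := D q q le_rfl (a p - (a q + a q)) ⟨p, hpq, le_tsub_add⟩
  by_cases hlp : l = p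
  · subst hlp
    have h1 := Finsupp.le_def.mp hl t
    rw [Finsupp.add_apply, Finsupp.tsub_apply, Finsupp.add_apply] at h1
    omega
  · have hne : ¬a l ≤ a q := M l q (ne_of_lt hlq)
    rw [Finsupp.le_def] at hne
    push_neg at hne
    obtain ⟨s, hs⟩ := hne
    have h2 := Finsupp.le_def.mp hl s
    rw [Finsupp.add_apply, Finsupp.tsub_apply, Finsupp.add_apply] at h2
    rcases lt_or_gt_of_ne hlp with h | h
    · have h3 := hG1' l p q h hpq s
      omega
    · have h3 := hG1' p l q h hlq s
      omega

/-- The key divisibility step: under the gcd characterization, the colon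
witness can be taken to be the original index. -/
lemma key {n : ℕ} (a : Fin n → (Fin m →₀ ℕ))
    (hG1 : ∀ p q r : Fin n, p < q → q < r → ∀ t, min (a p t) (a q t) ≤ a r t)
    (hG2 : ∀ p q : Fin n, p < q → ∀ t, a q t < a p t → a q t = 0)
    (i k : Fin n) (hik : i ≤ k) (e : Fin m →₀ ℕ) (j : Fin n) (hji : j < i)
    (h : a j ≤ e + (a i + a k)) : a j ≤ e + a k := by
  rw [Finsupp.le_def]
  intro t
  have ht := Finsupp.le_def.mp h t
  rw [Finsupp.add_apply, Finsupp.add_apply] at ht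
  rw [Finsupp.add_apply]
  rcases eq_or_lt_of_le hik with heq | hlt
  · subst heq
    rcases Nat.lt_or_ge (a i t) (a j t) with hc | hc
    · have := hG2 j i hji t hc
      omega
    · omega
  · rcases Nat.lt_or_ge (a k t) (a j t) with hc | hc
    · have hk0 := hG2 j k (lt_trans hji hlt) t hc
      have hmin := hG1 j i k hji hlt t
      omega
    · omega

end DSeqAux

/-- If a (minimal) monomial sequence `f_1,…,f_n` is a d-sequence, then every
subsequence (selected by a strictly monotone map) is also a d-sequence. -/
theorem stmt_6 {K : Type*} [Field K] {m n p : ℕ} (a : Fin n → (Fin m →₀ ℕ))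
    (f : Fin n → MvPolynomial (Fin m) K) (hf : ∀ i, f i = monomial (a i) 1)
    (hd : IsDSequence f) (g : Fin p → Fin n) (hg : StrictMono g) :
    IsDSequence (f ∘ g) := by
  classical
  have M : ∀ i j : Fin n, i ≠ j → ¬a i ≤ a j := by
    intro i j hij hle
    refine hd.1 i j hij ?_
    rw [hf i, hf j]
    exact monomial_dvd_monomial.mpr ⟨Or.inr hle, dvd_refl _⟩
  have himg : ∀ (i : Fin n), f '' {j | j < i} =
      (fun d => monomial d (1 : K)) '' (a '' {j | j < i}) := by
    intro i
    rw [← Set.image_comp]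
    exact Set.image_congr fun j _ => hf j
  have D : ∀ i k : Fin n, i ≤ k → ∀ e : Fin m →₀ ℕ,
      (∃ j, j < i ∧ a j ≤ e + (a i + a k)) → (∃ j, j < i ∧ a j ≤ e + a k) := by
    intro i k hik e hex
    have hcol := hd.2 i k hik
    rw [himg i, hf i, hf k, monomial_mul, mul_one] at hcol
    have hiff := (DSeqAux.colon_eq_iff (a '' {j | j < i}) (a i + a k) (a k)).mp hcol e
    obtain ⟨j, hj, hle⟩ := hex
    obtain ⟨b, ⟨j', hj', rfl⟩, hble⟩ := hiff.mp ⟨a j, ⟨j, hj, rfl⟩, hle⟩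
    exact ⟨j', hj', hble⟩
  obtain ⟨hG1, hG2⟩ := DSeqAux.G1G2 a M D
  constructor
  · intro i j hij hdvd
    exact hd.1 (g i) (g j) (fun h => hij (hg.injective h)) hdvd
  · intro i k hik
    have himg' : (f ∘ g) '' {j | j < i} =
        (fun d => monomial d (1 : K)) '' ((fun j => a (g j)) '' {j | j < i}) := by
      rw [← Set.image_comp]
      exact Set.image_congr fun j _ => hf (g j)
    have h1 : (f ∘ g) i * (f ∘ g) k = monomial (a (g i) + a (g k)) (1 : K) := by
      simp only [Function.comp_apply, hf, monomial_mul, mul_one]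
    have h2 : (f ∘ g) k = monomial (a (g k)) (1 : K) := hf (g k)
    rw [himg', h1, h2, DSeqAux.colon_eq_iff]
    intro e
    constructor
    · rintro ⟨b, ⟨j, hj, rfl⟩, hle⟩
      refine ⟨a (g j), ⟨j, hj, rfl⟩, ?_⟩
      exact DSeqAux.key a hG1 hG2 (g i) (g k) (hg.monotone hik) e (g j) (hg hj) hle
    · rintro ⟨b, ⟨j, hj, rfl⟩, hle⟩
      exact ⟨a (g j), ⟨j, hj, rfl⟩, hle.trans (add_le_add le_rfl le_add_self)⟩
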